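/- Let w be a pp-irreducible string and c < d positions of w. Then c ⊏_w d if and only if d ≤ c + ρ_w(c) ≤ d + ρ_w(d); that is, for pp-irreducible strings the condition c ≤ d − ρ_w(d) in the definition of ⊏_w is redundant, because positions with d − ρ_w(d) < c < d ≤ c + ρ_w(c) ≤ d + ρ_w(d) would give a Z-shape occurrence ⟨c,d⟩ ending strictly before position |w|, which is impossible in a pp-irreducible string. -/

import Mathlib

/-!
Common definitions: strings as `List α` over an alphabet `α`, 1-based positions.
-/

variable {α : Type*}

/-- The substring `w[i:j]` (1-based, inclusive; empty when `j < i`). -/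
def seg (w : List α) (i j : ℕ) : List α := (w.take j).drop (i - 1)

/-- `w` has an even palindrome of radius `r` centered at position `c`:
`r ≤ c`, `c + r ≤ |w|` and `w[c−k+1] = w[c+k]` for all `1 ≤ k ≤ r`
(here expressed with 0-based list indexing: `w[c−k]? = w[c+k−1]?`). -/
def PalAt (w : List α) (c r : ℕ) : Prop :=
  r ≤ c ∧ c + r ≤ w.length ∧ ∀ k, 1 ≤ k → k ≤ r → w[c - k]? = w[c + k - 1]?

/-- `ρ_w(c)`: the maximal even-palindrome radius at center `c`. -/
noncomputable def rho (w : List α) (c : ℕ) : ℕ := sSup {r | PalAt w c r}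

/-- The reduction relation: `x y yᴿ y z → x y z` for nonempty `y`. -/
def Reduces (w w' : List α) : Prop :=
  ∃ x y z : List α, y ≠ [] ∧ w = x ++ y ++ y.reverse ++ y ++ z ∧ w' = x ++ y ++ z

/-- A string is irreducible if no reduction applies to it. -/
def ZIrreducible (w : List α) : Prop := ∀ w', ¬ Reduces w w'

def ZReducible (w : List α) : Prop := ∃ w', Reduces w w'

/-- `w` is pp-irreducible if its longest proper prefix `w[1:|w|−1]` is irreducible. -/
def PPIrreducible (w : List α) : Prop := ZIrreducible w.dropLast

/-- `w` is ss-reducible if it is reducible and pp-irreducible. -/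
def SSReducible (w : List α) : Prop := ZReducible w ∧ PPIrreducible w

/-- A Z-shape occurrence `⟨p1, p2⟩` in `w`: with `s = p2 − p1 ≥ 1`, `p1 − s ≥ 0`,
`p2 + s ≤ |w|` and `w[p1−s+1 : p2+s] = x xᴿ x` where `x = w[p1−s+1 : p1]`. -/
def ZOcc (w : List α) (p1 p2 : ℕ) : Prop :=
  p1 < p2 ∧ p2 - p1 ≤ p1 ∧ p2 + (p2 - p1) ≤ w.length ∧
    seg w (p1 - (p2 - p1) + 1) (p2 + (p2 - p1)) =
      seg w (p1 - (p2 - p1) + 1) p1 ++ (seg w (p1 - (p2 - p1) + 1) p1).reverse ++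
        seg w (p1 - (p2 - p1) + 1) p1

/-- `c ⊏_w d` : `c ≤ d − ρ_w(d) ≤ d ≤ c + ρ_w(c) ≤ d + ρ_w(d)` with `c ≠ d`
(written without truncated subtraction). -/
def Sqsub (w : List α) (c d : ℕ) : Prop :=
  c < d ∧ c + rho w d ≤ d ∧ d ≤ c + rho w c ∧ c + rho w c ≤ d + rho w d

/-- `𝓕_w(c)`: the maximum frontier over all palindrome chains from `c`
(a palindrome chain is a nonempty list starting at `c` whose consecutive
elements are related by `⊏_w`; its frontier is `e + ρ_w(e)` for its last element `e`). -/
noncomputable def maxFrontier (w : List α) (c : ℕ) : ℕ :=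
  sSup {f | ∃ l : List ℕ, l.head? = some c ∧ l.Chain' (Sqsub w) ∧
      ∃ e, l.getLast? = some e ∧ f = e + rho w e}

/-- `𝓐_w(d)`: the smallest position `c` with `c ≤ d ≤ 𝓕_w(c)`. -/
noncomputable def originator (w : List α) (d : ℕ) : ℕ :=
  sInf {c | 1 ≤ c ∧ c ≤ d ∧ d ≤ maxFrontier w c}

/-- A position `c` of a pp-irreducible string `w` is stable if `𝓕_w(c) < |w|`. -/
def Stable (w : List α) (c : ℕ) : Prop := maxFrontier w c < w.length

/-- `c` is strongly stable if every position in `[1:c]` is stable. -/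
def StronglyStable (w : List α) (c : ℕ) : Prop := ∀ e, 1 ≤ e → e ≤ c → Stable w e

/-- `T` is the output of an end-to-end walk on the path graph labeled `u`:
there are vertices `p 0 = 0, …, p |T| = |u|`, each `≤ |u|`, consecutive ones
adjacent, and `T[i] = u[max (p (i−1)) (p i)]` (1-based; here 0-based indexing). -/
def EndToEndWalkOutput (u T : List α) : Prop :=
  ∃ p : ℕ → ℕ, p 0 = 0 ∧ p T.length = u.length ∧
    (∀ i, i ≤ T.length → p i ≤ u.length) ∧
    (∀ i, i < T.length → p (i + 1) = p i + 1 ∨ p i = p (i + 1) + 1) ∧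
    (∀ i, i < T.length → T[i]? = u[max (p i) (p (i + 1)) - 1]?)

/-- `P` is accurate enough between `a` and `b`:
`min (P e) (b − e) = min (ρ_w e) (b − e)` for all `e ∈ [a:b]`. -/
def AccEnough (w : List α) (P : ℕ → ℕ) (a b : ℕ) : Prop :=
  ∀ e, a ≤ e → e ≤ b → min (P e) (b - e) = min (rho w e) (b - e)

open Classical in
/-- `ν_w(c)`: the largest `e` with `e ⊏_w c`, or `1` if there is none. -/
noncomputable def nu (w : List α) (c : ℕ) : ℕ :=
  if ∃ e, Sqsub w e c then sSup {e | Sqsub w e c} else 1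

/-- `c` is left-good w.r.t. `P` if `P` is accurate enough between `ν_w(c)` and `c`. -/
def LeftGood (w : List α) (P : ℕ → ℕ) (c : ℕ) : Prop := AccEnough w P (nu w c) c

/-- `c` is right-good w.r.t. `P` if `P` is accurate enough between `c` and `c + ρ_w(c)`. -/
def RightGood (w : List α) (P : ℕ → ℕ) (c : ℕ) : Prop := AccEnough w P c (c + rho w c)

/-- for a pp-irreducible string `w` and positions `c < d`,
`c ⊏_w d` iff `d ≤ c + ρ_w(c) ≤ d + ρ_w(d)` (the condition `c ≤ d − ρ_w(d)`
is redundant). -/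
lemma palAt_rho' (w : List α) {c : ℕ} (h : c ≤ w.length) : PalAt w c (rho w c) := by
  have hne : {r | PalAt w c r}.Nonempty := ⟨0, ⟨Nat.zero_le _, by omega, fun k hk hk' => by omega⟩⟩
  have hbd : BddAbove {r | PalAt w c r} := ⟨c, fun r hr => hr.1⟩
  exact Nat.sSup_mem hne hbd

theorem sqsub_iff_of_ppIrreducible (w : List α) (hpp : PPIrreducible w) (c d : ℕ)
    (hc : 1 ≤ c) (hcd : c < d) (hd : d ≤ w.length) :
    Sqsub w c d ↔ (d ≤ c + rho w c ∧ c + rho w c ≤ d + rho w d) := by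
  constructor
  · exact fun h => ⟨h.2.2.1, h.2.2.2⟩
  rintro ⟨h1, h2⟩
  refine ⟨hcd, ?_, h1, h2⟩
  by_contra hcon
  push_neg at hcon
  set s := d - c with hs
  obtain ⟨hρc_le, hρc_len, hpalc⟩ := palAt_rho' w (le_trans hcd.le hd)
  obtain ⟨hρd_le, hρd_len, hpald⟩ := palAt_rho' w hd
  have hs1 : 1 ≤ s := by omega
  have hsρc : s ≤ rho w c := by omega
  have hsc : s ≤ c := by omega
  have hρd : s + 1 ≤ rho w d := by omega
  have hlen : d + s + 1 ≤ w.length := by omega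
  set u := w.dropLast with hu
  have hul : u.length = w.length - 1 := List.length_dropLast
  have hw : ∀ i : ℕ, i < u.length → u[i]? = w[i]? := by
    intro i hi
    rw [List.getElem?_eq_getElem hi, List.getElem_dropLast, List.getElem?_eq_getElem]
  set x : List α := (u.drop (c - s)).take s with hxdef
  have hxlen : x.length = s := by
    rw [hxdef, List.length_take, List.length_drop]; omega
  set s2 : List α := (u.drop c).take s with hs2def
  set s3 : List α := (u.drop d).take s with hs3def
  have hs2len : s2.length = s := by rw [hs2def, List.length_take, List.length_drop]; omega
  have hs3len : s3.length = s := by rw [hs3def, List.length_take, List.length_drop]; omega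
  have hdec : u = u.take (c - s) ++ x ++ s2 ++ s3 ++ u.drop (d + s) := by
    have e1 : u.take (c - s) ++ u.drop (c - s) = u := List.take_append_drop _ _
    have e2 : x ++ (u.drop (c - s)).drop s = u.drop (c - s) := List.take_append_drop _ _
    have e3 : s2 ++ (u.drop c).drop s = u.drop c := List.take_append_drop _ _
    have e4 : s3 ++ (u.drop d).drop s = u.drop d := List.take_append_drop _ _
    have d2 : (u.drop (c - s)).drop s = u.drop c := by
      rw [List.drop_drop]; try congr 1 <;> omega
    have d3 : (u.drop c).drop s = u.drop d := by
      rw [List.drop_drop]; try congr 1 <;> omega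
    have d4 : (u.drop d).drop s = u.drop (d + s) := by
      rw [List.drop_drop]; try congr 1 <;> omega
    rw [d2] at e2; rw [d3] at e3; rw [d4] at e4
    conv_lhs => rw [← e1]
    conv_lhs => rw [← e2]
    conv_lhs => rw [← e3]
    conv_lhs => rw [← e4]
    simp only [List.append_assoc]

  -- pointwise equality helpers on `x`, `s2`, `s3` via `getElem?`
  have hxq : ∀ i : ℕ, i < s → x[i]? = w[c - s + i]? := by
    intro i hi
    rw [hxdef, List.getElem?_take, if_pos hi, List.getElem?_drop]
    exact hw _ (by omega)
  have hs2q : ∀ i : ℕ, i < s → s2[i]? = w[c + i]? := by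
    intro i hi
    rw [hs2def, List.getElem?_take, if_pos hi, List.getElem?_drop]
    exact hw _ (by omega)
  have hs3q : ∀ i : ℕ, i < s → s3[i]? = w[d + i]? := by
    intro i hi
    rw [hs3def, List.getElem?_take, if_pos hi, List.getElem?_drop]
    exact hw _ (by omega)
  have hx2 : s2 = x.reverse := by
    apply List.ext_getElem?
    intro i
    by_cases hi : i < s
    · rw [hs2q i hi]
      have hrev : x.reverse[i]? = x[x.length - 1 - i]? := by
        rw [List.getElem?_eq_getElem (by rw [List.length_reverse, hxlen]; omega),
          List.getElem_reverse, List.getElem?_eq_getElem]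
      rw [hrev, hxlen]
      rw [show s - 1 - i = s - (i + 1) from by omega]
      rw [hxq _ (by omega)]
      rw [show c - s + (s - (i + 1)) = c - (i + 1) from by omega,
        show c + i = c + (i + 1) - 1 from by omega]
      exact (hpalc (i + 1) (by omega) (by omega)).symm
    · rw [List.getElem?_eq_none (by omega : s2.length ≤ i),
        List.getElem?_eq_none (by rw [List.length_reverse, hxlen]; omega)]
  have hx3 : s3 = x := by
    apply List.ext_getElem?
    intro i
    by_cases hi : i < s
    · rw [hs3q i hi, hxq i hi]
      have hpd := hpald (i + 1) (by omega) (by omega)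
      have hpc := hpalc (s - i) (by omega) (by omega)
      calc w[d + i]? = w[d + (i + 1) - 1]? := by rw [show d + i = d + (i + 1) - 1 from by omega]
        _ = w[d - (i + 1)]? := hpd.symm
        _ = w[c + (s - i) - 1]? := by rw [show d - (i + 1) = c + (s - i) - 1 from by omega]
        _ = w[c - (s - i)]? := hpc.symm
        _ = w[c - s + i]? := by rw [show c - (s - i) = c - s + i from by omega]
    · rw [List.getElem?_eq_none (by omega : s3.length ≤ i),
        List.getElem?_eq_none (by omega : x.length ≤ i)]
  have hxne : x ≠ [] := by
    intro h; rw [h] at hxlen; simp at hxlen; omega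
  have heq : u = u.take (c - s) ++ x ++ x.reverse ++ x ++ u.drop (d + s) := by
    rw [hx2, hx3] at hdec; exact hdec
  exact hpp (u.take (c - s) ++ x ++ u.drop (d + s))
    ⟨u.take (c - s), x, u.drop (d + s), hxne, heq, rfl⟩
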